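/- For any solution m of the mean-field equation and any convex continuous h : [0,1] → ℝ, the quantity ⟨h, m(t)⟩ is non-increasing in t. -/

import Mathlib

open MeasureTheory Set Filter

/-- The (junk-valued) primitive of an arbitrary bounded function is measurable. -/
lemma primitive_measurable (F : ℝ → ℝ) (B : ℝ) (hB : ∀ u, |F u| ≤ B) :
    Measurable (fun u : ℝ => ∫ r in (0:ℝ)..(max u 0), F r) := by
  set A : Set ℝ := {r | 0 ≤ r ∧ IntervalIntegrable F volume 0 r} with hAdef
  have h0A : (0:ℝ) ∈ A := ⟨le_rfl, IntervalIntegrable.refl⟩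
  have hdown : ∀ ⦃r⦄, r ∈ A → ∀ ⦃r'⦄, 0 ≤ r' → r' ≤ r → r' ∈ A := by
    intro r hr r' h0 hle
    refine ⟨h0, hr.2.mono_set ?_⟩
    rw [Set.uIcc_of_le hr.1, Set.uIcc_of_le h0]
    exact Set.Icc_subset_Icc le_rfl hle
  have hlip : ∀ a ∈ A, ∀ b ∈ A, a ≤ b →
      |(∫ r in (0:ℝ)..b, F r) - ∫ r in (0:ℝ)..a, F r| ≤ B * |b - a| := by
    intro a ha b hb hab
    rw [intervalIntegral.integral_interval_sub_left hb.2 ha.2]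
    have := intervalIntegral.norm_integral_le_of_norm_le_const
      (a := a) (b := b) (C := B) (f := F) (fun x _ => by
        simpa [Real.norm_eq_abs] using hB x)
    simpa [Real.norm_eq_abs] using this
  have hlip' : ∀ a ∈ A, ∀ b ∈ A,
      |(∫ r in (0:ℝ)..b, F r) - ∫ r in (0:ℝ)..a, F r| ≤ B * |b - a| := by
    intro a ha b hb
    rcases le_total a b with hab | hab
    · exact hlip a ha b hb hab
    · rw [abs_sub_comm, abs_sub_comm b a]; exact hlip b hb a ha hab
  have hB0 : 0 ≤ B := le_trans (abs_nonneg _) (hB 0)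
  by_cases hbdd : BddAbove A
  · -- bounded case
    have hAne : A.Nonempty := ⟨0, h0A⟩
    set τ := sSup A with hτdef
    have hτ0 : 0 ≤ τ := le_csSup hbdd h0A
    have hτA : τ ∈ A := by
      obtain ⟨u, hmono, htend, hmem⟩ := exists_seq_tendsto_sSup hAne hbdd
      refine ⟨hτ0, ?_⟩
      rw [intervalIntegrable_iff_integrableOn_Ioc_of_le hτ0]
      have hsub : Set.Ioo 0 τ ⊆ ⋃ n, Set.Ioc 0 (u n) := by
        intro x hx
        have : ∀ᶠ n in atTop, x < u n := htend.eventually (eventually_gt_nhds hx.2)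
        obtain ⟨n, hn⟩ := this.exists
        exact Set.mem_iUnion.2 ⟨n, hx.1, hn.le⟩
      have hasm : AEStronglyMeasurable F (volume.restrict (Set.Ioo 0 τ)) := by
        refine AEStronglyMeasurable.mono_set hsub ?_
        refine aestronglyMeasurable_iUnion_iff.2 fun n => ?_
        have := (hmem n).2
        rw [intervalIntegrable_iff_integrableOn_Ioc_of_le (hmem n).1] at this
        exact this.1
      have hasm' : AEStronglyMeasurable F (volume.restrict (Set.Ioc 0 τ)) := by
        rwa [Measure.restrict_congr_set Ioo_ae_eq_Ioc] at hasm
      exact ⟨hasm', HasFiniteIntegral.of_bounded (C := B)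
        (Eventually.of_forall fun x => by simpa [Real.norm_eq_abs] using hB x)⟩
    -- the function
    have key : (fun u : ℝ => ∫ r in (0:ℝ)..(max u 0), F r)
        = fun u => if u ≤ τ then (∫ r in (0:ℝ)..(min (max u 0) τ), F r) else 0 := by
      funext u
      by_cases hu : u ≤ τ
      · rw [if_pos hu]
        congr 1
        exact (min_eq_left (max_le hu hτ0)).symm
      · rw [if_neg hu]
        push_neg at hu
        have hmax : max u 0 = u := max_eq_left (hτ0.trans hu.le)
        rw [hmax]
        apply intervalIntegral.integral_undef
        intro hint
        exact absurd (le_csSup hbdd (⟨hτ0.trans hu.le, hint⟩ : u ∈ A)) (not_le.2 hu)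
    rw [key]
    have hQ : LipschitzWith (Real.toNNReal B)
        (fun u : ℝ => ∫ r in (0:ℝ)..(min (max u 0) τ), F r) := by
      apply LipschitzWith.of_dist_le_mul
      intro x y
      have hx : min (max x 0) τ ∈ A := hdown hτA (le_min (le_max_right _ _) hτ0) (min_le_right _ _)
      have hy : min (max y 0) τ ∈ A := hdown hτA (le_min (le_max_right _ _) hτ0) (min_le_right _ _)
      have h1 := hlip' _ hy _ hx
      have h2 : |min (max x 0) τ - min (max y 0) τ| ≤ |x - y| := by
        have h3 := abs_min_sub_min_le_max (max x 0) τ (max y 0) τ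
        simp only [sub_self, abs_zero] at h3
        exact h3.trans (max_le (abs_max_sub_max_le_abs _ _ _) (abs_nonneg _))
      rw [Real.dist_eq, Real.dist_eq, Real.coe_toNNReal _ hB0]
      calc |(∫ r in (0:ℝ)..(min (max x 0) τ), F r) - ∫ r in (0:ℝ)..(min (max y 0) τ), F r|
          ≤ B * |min (max x 0) τ - min (max y 0) τ| := h1
        _ ≤ B * |x - y| := by exact mul_le_mul_of_nonneg_left h2 hB0
    exact Measurable.ite measurableSet_Iic hQ.continuous.measurable measurable_const
  · -- unbounded case: A contains all of [0, ∞)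
    have hall : ∀ r : ℝ, 0 ≤ r → r ∈ A := by
      intro r h0
      rcases not_bddAbove_iff.mp hbdd r with ⟨r', hr'A, hrr'⟩
      exact hdown hr'A h0 hrr'.le
    have hQ : LipschitzWith (Real.toNNReal B)
        (fun u : ℝ => ∫ r in (0:ℝ)..(max u 0), F r) := by
      apply LipschitzWith.of_dist_le_mul
      intro x y
      have hx : max x 0 ∈ A := hall _ (le_max_right _ _)
      have hy : max y 0 ∈ A := hall _ (le_max_right _ _)
      have h1 := hlip' _ hy _ hx
      have h2 : |max x 0 - max y 0| ≤ |x - y| := abs_max_sub_max_le_abs _ _ _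
      rw [Real.dist_eq, Real.dist_eq, Real.coe_toNNReal _ hB0]
      exact h1.trans (mul_le_mul_of_nonneg_left h2 hB0)
    exact hQ.continuous.measurable

theorem convex_functional_nonincreasing (Δ w : ℝ) (hΔ : Δ ∈ Set.Ioc (0:ℝ) 1)
    (hw : w ∈ Set.Ioo (0:ℝ) 1)
    (m : ℝ → Measure ℝ)
    (hprob : ∀ t, IsProbabilityMeasure (m t))
    (hsupp : ∀ t, m t (Set.Icc (0:ℝ) 1)ᶜ = 0)
    (heq : ∀ h : ℝ → ℝ, Measurable h → (∃ C, ∀ u, |h u| ≤ C) →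
      ∀ t : ℝ, 0 ≤ t →
        (∫ x, h x ∂ m t) - (∫ x, h x ∂ m 0) =
          ∫ s in (0:ℝ)..t, ∫ x, (∫ y,
            (if |x - y| ≤ Δ then
              h (w * x + (1 - w) * y) + h (w * y + (1 - w) * x) - h x - h y
            else 0) ∂ m s) ∂ m s) :
    ∀ h : ℝ → ℝ, ConvexOn ℝ (Set.Icc (0:ℝ) 1) h →
      ContinuousOn h (Set.Icc (0:ℝ) 1) →
      ∀ s t : ℝ, 0 ≤ s → s ≤ t →
        (∫ x, h x ∂ m t) ≤ ∫ x, h x ∂ m s := by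
  intro h hconv hcont s t hs hst
  classical
  -- the clamped extension of h
  set clamp : ℝ → ℝ := fun x => max 0 (min x 1) with hclampdef
  have hclamp_cont : Continuous clamp :=
    continuous_const.max (continuous_id.min continuous_const)
  have hclamp_mem : ∀ x, clamp x ∈ Set.Icc (0:ℝ) 1 :=
    fun x => ⟨le_max_left _ _, max_le zero_le_one (min_le_right _ _)⟩
  have hclamp_id : ∀ x ∈ Set.Icc (0:ℝ) 1, clamp x = x := by
    intro x hx
    rw [hclampdef]
    dsimp only
    rw [min_eq_left hx.2, max_eq_right hx.1]
  obtain ⟨C, hC⟩ := isCompact_Icc.exists_bound_of_continuousOn hcont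
  set g : ℝ → ℝ := fun x => h (clamp x) with hgdef
  have hgcont : Continuous g := hcont.comp_continuous hclamp_cont hclamp_mem
  have hgbd : ∀ u, |g u| ≤ C := fun u => by
    simpa [Real.norm_eq_abs] using hC _ (hclamp_mem u)
  have hgid : ∀ x ∈ Set.Icc (0:ℝ) 1, g x = h x := by
    intro x hx; rw [hgdef]; dsimp only; rw [hclamp_id x hx]
  have hgm : Measurable g := hgcont.measurable
  have hC0 : 0 ≤ C := le_trans (abs_nonneg _) (hgbd 0)
  -- the collision kernel
  set K : ℝ × ℝ → ℝ := fun p => if |p.1 - p.2| ≤ Δ then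
      g (w * p.1 + (1 - w) * p.2) + g (w * p.2 + (1 - w) * p.1) - g p.1 - g p.2
    else 0 with hKdef
  have hKmeas : Measurable K := by
    apply Measurable.ite
    · exact measurableSet_le ((continuous_fst.sub continuous_snd).abs).measurable
        measurable_const
    · have c1 : Continuous fun p : ℝ × ℝ => w * p.1 + (1 - w) * p.2 :=
        (continuous_const.mul continuous_fst).add (continuous_const.mul continuous_snd)
      have c2 : Continuous fun p : ℝ × ℝ => w * p.2 + (1 - w) * p.1 :=
        (continuous_const.mul continuous_snd).add (continuous_const.mul continuous_fst)
      exact ((((hgcont.comp c1).add (hgcont.comp c2)).sub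
        (hgcont.comp continuous_fst)).sub (hgcont.comp continuous_snd)).measurable
    · exact measurable_const
  have hKbd : ∀ p, ‖K p‖ ≤ 4 * C := by
    intro p
    rw [Real.norm_eq_abs, hKdef]
    dsimp only
    split
    · have b1 := abs_le.1 (hgbd (w * p.1 + (1 - w) * p.2))
      have b2 := abs_le.1 (hgbd (w * p.2 + (1 - w) * p.1))
      have b3 := abs_le.1 (hgbd p.1)
      have b4 := abs_le.1 (hgbd p.2)
      rw [abs_le]
      constructor <;> linarith
    · rw [abs_zero]; positivity
  have hKnonpos : ∀ x y : ℝ, x ∈ Set.Icc (0:ℝ) 1 → y ∈ Set.Icc (0:ℝ) 1 → K (x, y) ≤ 0 := by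
    intro x y hx hy
    rw [hKdef]
    dsimp only
    split
    · have hw1 : (0:ℝ) ≤ w := hw.1.le
      have hw2 : (0:ℝ) ≤ 1 - w := by linarith [hw.2]
      have ha : w * x + (1 - w) * y ∈ Set.Icc (0:ℝ) 1 := by
        constructor
        · have := mul_nonneg hw1 hx.1; have := mul_nonneg hw2 hy.1; linarith
        · nlinarith [hx.2, hy.2]
      have hb : w * y + (1 - w) * x ∈ Set.Icc (0:ℝ) 1 := by
        constructor
        · have := mul_nonneg hw1 hy.1; have := mul_nonneg hw2 hx.1; linarith
        · nlinarith [hx.2, hy.2]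
      have hcx := hconv.2 hx hy hw1 hw2 (by ring)
      have hcy := hconv.2 hy hx hw1 hw2 (by ring)
      simp only [smul_eq_mul] at hcx hcy
      rw [hgid _ ha, hgid _ hb, hgid _ hx, hgid _ hy]
      linarith
    · exact le_rfl
  -- the time-indexed family of measures, made measurable
  set M : ℝ → Measure ℝ := fun u => m (max u 0) with hMdef
  have hMprob : ∀ u, IsProbabilityMeasure (M u) := fun u => hprob _
  have hMmeas : Measurable M := by
    apply Measure.measurable_of_measurable_coe
    intro E hE
    set k : ℝ → ℝ := E.indicator fun _ => (1:ℝ) with hkdef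
    have hkm : Measurable k := measurable_const.indicator hE
    have hkb : ∀ u, |k u| ≤ 1 := by
      intro u
      rw [hkdef]
      by_cases hu : u ∈ E <;>
        simp [Set.indicator_of_mem, Set.indicator_of_notMem, hu]
    set Fk : ℝ → ℝ := fun u => ∫ x, (∫ y, (if |x - y| ≤ Δ then
        k (w * x + (1 - w) * y) + k (w * y + (1 - w) * x) - k x - k y
      else 0) ∂ m u) ∂ m u with hFkdef
    have hFkb : ∀ u, |Fk u| ≤ 4 := by
      intro u
      haveI := hprob u
      have hinner : ∀ x, ‖∫ y, (if |x - y| ≤ Δ then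
          k (w * x + (1 - w) * y) + k (w * y + (1 - w) * x) - k x - k y
        else 0) ∂ m u‖ ≤ 4 := by
        intro x
        refine le_trans (norm_integral_le_of_norm_le_const (C := 4) ?_) (by simp)
        refine Filter.Eventually.of_forall fun y => ?_
        rw [Real.norm_eq_abs]
        split
        · have b1 := abs_le.1 (hkb (w * x + (1 - w) * y))
          have b2 := abs_le.1 (hkb (w * y + (1 - w) * x))
          have b3 := abs_le.1 (hkb x)
          have b4 := abs_le.1 (hkb y)
          rw [abs_le]; constructor <;> linarith
        · rw [abs_zero]; norm_num
      rw [hFkdef]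
      have := norm_integral_le_of_norm_le_const (μ := m u) (C := 4) (Filter.Eventually.of_forall hinner)
      simpa [Real.norm_eq_abs] using this
    have hheqk := heq k hkm ⟨1, hkb⟩
    have hrepr : (fun u => M u E)
        = fun u => ENNReal.ofReal ((∫ x, k x ∂ m 0) + ∫ r in (0:ℝ)..(max u 0), Fk r) := by
      funext u
      have h1 : (∫ x, k x ∂ m (max u 0)) - (∫ x, k x ∂ m 0)
          = ∫ r in (0:ℝ)..(max u 0), Fk r := hheqk (max u 0) (le_max_right u 0)
      have h2 : ∫ x, k x ∂ m (max u 0) = ((m (max u 0)) E).toReal := by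
        rw [hkdef, integral_indicator_const (1:ℝ) hE]; simp; rfl
      have h3 : (∫ x, k x ∂ m 0) + ∫ r in (0:ℝ)..(max u 0), Fk r
          = ((m (max u 0)) E).toReal := by
        rw [← h2]; linarith
      rw [h3, hMdef]
      exact (ENNReal.ofReal_toReal (measure_ne_top _ _)).symm
    rw [hrepr]
    exact (measurable_const.add (primitive_measurable Fk 4 hFkb)).ennreal_ofReal
  -- kernels
  set κ : ProbabilityTheory.Kernel ℝ ℝ := ⟨M, hMmeas⟩ with hκdef
  haveI : ProbabilityTheory.IsMarkovKernel κ := ⟨fun u => hMprob u⟩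
  set κ2 : ProbabilityTheory.Kernel (ℝ × ℝ) ℝ := ⟨fun q => M q.1, hMmeas.comp measurable_fst⟩
    with hκ2def
  haveI : ProbabilityTheory.IsMarkovKernel κ2 := ⟨fun q => hMprob q.1⟩
  set f : ℝ → ℝ := fun u => ∫ x, (∫ y, K (x, y) ∂ M u) ∂ M u with hfdef
  have hfSM : StronglyMeasurable f := by
    have hKm2 : Measurable fun p : (ℝ × ℝ) × ℝ => K (p.1.2, p.2) :=
      hKmeas.comp ((measurable_fst.snd).prodMk measurable_snd)
    have h2 : StronglyMeasurable (fun q : ℝ × ℝ => ∫ y, K (q.2, y) ∂ M q.1) :=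
      MeasureTheory.StronglyMeasurable.integral_kernel_prod_right' (κ := κ2)
        hKm2.stronglyMeasurable
    exact MeasureTheory.StronglyMeasurable.integral_kernel_prod_right' (κ := κ) h2
  have hfb : ∀ u, ‖f u‖ ≤ 4 * C := by
    intro u
    haveI := hMprob u
    rw [hfdef]
    refine le_trans (norm_integral_le_of_norm_le_const (C := 4 * C) ?_) (by simp)
    refine Filter.Eventually.of_forall fun x => ?_
    exact le_trans (norm_integral_le_of_norm_le_const (C := 4 * C)
      (Filter.Eventually.of_forall fun y => hKbd _)) (by simp)
  have hfae : ∀ u, ∀ᵐ x ∂ M u, x ∈ Set.Icc (0:ℝ) 1 := by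
    intro u
    rw [MeasureTheory.ae_iff]
    exact hsupp _
  have hfnp : ∀ u, f u ≤ 0 := by
    intro u
    apply integral_nonpos_of_ae
    filter_upwards [hfae u] with x hx
    apply integral_nonpos_of_ae
    filter_upwards [hfae u] with y hy
    exact hKnonpos x y hx hy
  have hII : ∀ a b : ℝ, a ≤ b → IntervalIntegrable f volume a b := by
    intro a b hab
    rw [intervalIntegrable_iff_integrableOn_Ioc_of_le hab]
    exact ⟨hfSM.aestronglyMeasurable.restrict,
      HasFiniteIntegral.of_bounded (C := 4 * C) (Filter.Eventually.of_forall hfb)⟩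
  -- apply the equation to g
  set Fg : ℝ → ℝ := fun u => ∫ x, (∫ y, (if |x - y| ≤ Δ then
      g (w * x + (1 - w) * y) + g (w * y + (1 - w) * x) - g x - g y
    else 0) ∂ m u) ∂ m u with hFgdef
  have ht0 : 0 ≤ t := hs.trans hst
  have h1 : (∫ x, g x ∂ m t) - (∫ x, g x ∂ m 0) = ∫ r in (0:ℝ)..t, Fg r :=
    heq g hgm ⟨C, hgbd⟩ t ht0
  have h2 : (∫ x, g x ∂ m s) - (∫ x, g x ∂ m 0) = ∫ r in (0:ℝ)..s, Fg r :=
    heq g hgm ⟨C, hgbd⟩ s hs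
  have hcongr : ∀ b : ℝ, 0 ≤ b → (∫ r in (0:ℝ)..b, Fg r) = ∫ r in (0:ℝ)..b, f r := by
    intro b hb
    apply intervalIntegral.integral_congr
    intro r hr
    rw [Set.uIcc_of_le hb] at hr
    have hr0 : max r 0 = r := max_eq_left hr.1
    rw [hFgdef, hfdef, hMdef]
    dsimp only
    rw [hr0]
  rw [hcongr t ht0] at h1
  rw [hcongr s hs] at h2
  have h3 : (∫ x, g x ∂ m t) - (∫ x, g x ∂ m s) = ∫ r in s..t, f r := by
    rw [← intervalIntegral.integral_interval_sub_left (hII 0 t ht0) (hII 0 s hs)]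
    linarith
  have h4 : (∫ r in s..t, f r) ≤ 0 := by
    have h5 : 0 ≤ ∫ r in s..t, -f r :=
      intervalIntegral.integral_nonneg hst (fun u _ => neg_nonneg.2 (hfnp u))
    rw [intervalIntegral.integral_neg] at h5
    linarith
  have hgh : ∀ r : ℝ, (∫ x, h x ∂ m r) = ∫ x, g x ∂ m r := by
    intro r
    apply integral_congr_ae
    have hae : ∀ᵐ x ∂ m r, x ∈ Set.Icc (0:ℝ) 1 := by
      rw [MeasureTheory.ae_iff]; exact hsupp r
    filter_upwards [hae] with x hx
    exact (hgid x hx).symm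
  rw [hgh t, hgh s]
  linarith
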